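/- In the setting of the time-varying covariance recursion, assume additionally that M is Schur stable, and for each i ≥ 0 let Σ_{Δ_∞^i} denote the unique symmetric solution of X = M X Mᵀ + Σ_W + L Σ_{Z_i} Lᵀ. Define Υ_i := Σ_{Δ_∞^i} − Σ_{Δ_∞^{i-1}} for i ≥ 1. Then for every n ≥ 1, Σ_{Δ_n} = Σ_{Δ_∞^n} − Σ_{i=1}^{n} M^{n-i+1} Υ_i (Mᵀ)^{n-i+1}. -/

import Mathlib

open Matrix

section Aux

open Filter Topology
open scoped NNReal

attribute [local instance] Matrix.linftyOpNormedAddCommGroup Matrix.linftyOpNormedRing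
  Matrix.linftyOpNormedAlgebra

private lemma aux_norm_pow_tendsto_zero {p : ℕ} (hp : 0 < p)
    (A : Matrix (Fin p) (Fin p) ℂ)
    (hA : ∀ μ ∈ spectrum ℂ A, ‖μ‖ < 1) :
    Tendsto (fun k : ℕ => ‖A ^ k‖) atTop (nhds 0) := by
  haveI : Nontrivial (Matrix (Fin p) (Fin p) ℂ) := by
    refine ⟨0, 1, fun h => ?_⟩
    have := congr_fun (congr_fun h ⟨0, hp⟩) ⟨0, hp⟩
    simp [Matrix.one_apply] at this
  haveI : CompleteSpace (Matrix (Fin p) (Fin p) ℂ) := FiniteDimensional.complete ℂ _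
  have hρ : spectralRadius ℂ A < 1 := by
    have h := spectrum.spectralRadius_lt_of_forall_lt A (r := 1) ?_
    · simpa using h
    · intro z hz
      have := hA z hz
      rw [← NNReal.coe_lt_coe]
      simpa using this
  obtain ⟨r, hr1, hr2⟩ := ENNReal.lt_iff_exists_nnreal_btwn.mp hρ
  have hr2' : (r : ℝ) < 1 := by exact_mod_cast ENNReal.coe_lt_one_iff.mp hr2
  have hg := spectrum.pow_nnnorm_pow_one_div_tendsto_nhds_spectralRadius A
  have hev : ∀ᶠ n : ℕ in atTop, (‖A ^ n‖₊ : ENNReal) ^ (1 / (n : ℝ)) < (r : ENNReal) :=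
    hg.eventually_lt_const hr1
  have hle : ∀ᶠ n : ℕ in atTop, ‖A ^ n‖ ≤ (r : ℝ) ^ n := by
    filter_upwards [hev, eventually_ge_atTop 1] with n hn hn1
    have hn0 : (n : ℝ) ≠ 0 := by positivity
    have h1 : ((‖A ^ n‖₊ : ENNReal) ^ (1 / (n : ℝ))) ^ (n : ℝ) ≤ (r : ENNReal) ^ (n : ℝ) :=
      ENNReal.rpow_le_rpow hn.le (by positivity)
    rw [← ENNReal.rpow_mul, one_div, inv_mul_cancel₀ hn0, ENNReal.rpow_one,
      ENNReal.rpow_natCast, ← ENNReal.coe_pow, ENNReal.coe_le_coe] at h1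
    have h2 : ((‖A ^ n‖₊ : ℝ≥0) : ℝ) ≤ ((r ^ n : ℝ≥0) : ℝ) := NNReal.coe_le_coe.mpr h1
    simpa [NNReal.coe_pow] using h2
  exact squeeze_zero' (Eventually.of_forall fun n => norm_nonneg _) hle
    (tendsto_pow_atTop_nhds_zero_of_lt_one r.2 hr2')

private lemma aux_pow_entry_tendsto_zero {p : ℕ} (M : Matrix (Fin p) (Fin p) ℝ)
    (hM : ∀ μ ∈ spectrum ℂ (M.map (Complex.ofReal : ℝ → ℂ)), ‖μ‖ < 1)
    (i j : Fin p) :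
    Tendsto (fun k : ℕ => (M ^ k) i j) atTop (nhds 0) := by
  set A : Matrix (Fin p) (Fin p) ℂ := M.map (Complex.ofReal : ℝ → ℂ) with hAdef
  have hmap : ∀ k : ℕ, A ^ k = (M ^ k).map (Complex.ofReal : ℝ → ℂ) := by
    intro k
    induction k with
    | zero => simp [hAdef, Matrix.map_one]
    | succ n ih =>
      rw [pow_succ, pow_succ, ih, hAdef]
      ext a b
      simp [Matrix.mul_apply, Matrix.map_apply]
  have hnorm := aux_norm_pow_tendsto_zero i.pos A hM
  refine squeeze_zero_norm (fun k => ?_) hnorm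
  have hentry : ‖(A ^ k) i j‖ ≤ ‖A ^ k‖ := by
    rw [Matrix.linfty_opNorm_def]
    have hstep1 : ‖(A ^ k) i j‖ ≤ ∑ j', ‖(A ^ k) i j'‖ :=
      Finset.single_le_sum (f := fun j' => ‖(A ^ k) i j'‖)
        (fun _ _ => norm_nonneg _) (Finset.mem_univ j)
    have hstep2 : ((∑ j', ‖(A ^ k) i j'‖₊ : ℝ≥0) : ℝ)
        ≤ (((Finset.univ : Finset (Fin p)).sup fun i' => ∑ j', ‖(A ^ k) i' j'‖₊ : ℝ≥0) : ℝ) :=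
      NNReal.coe_le_coe.mpr
        (Finset.le_sup (f := fun i' => ∑ j', ‖(A ^ k) i' j'‖₊) (Finset.mem_univ i))
    refine hstep1.trans (le_trans (le_of_eq ?_) hstep2)
    push_cast
    rfl
  have hMA : ‖(M ^ k) i j‖ = ‖(A ^ k) i j‖ := by
    rw [hmap k]; simp [Matrix.map_apply]
  rw [hMA]; exact hentry

private lemma aux_fixed_zero {p : ℕ} (M : Matrix (Fin p) (Fin p) ℝ)
    (hM : ∀ μ ∈ spectrum ℂ (M.map (Complex.ofReal : ℝ → ℂ)), ‖μ‖ < 1)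
    (D : Matrix (Fin p) (Fin p) ℝ) (hD : D = M * D * Mᵀ) : D = 0 := by
  have hiter : ∀ k : ℕ, D = M ^ k * D * Mᵀ ^ k := by
    intro k
    induction k with
    | zero => simp
    | succ n ih =>
      calc D = M ^ n * D * Mᵀ ^ n := ih
      _ = M ^ n * (M * D * Mᵀ) * Mᵀ ^ n := by rw [← hD]
      _ = M ^ (n + 1) * D * Mᵀ ^ (n + 1) := by
        rw [pow_succ, pow_succ']
        simp only [Matrix.mul_assoc]
  ext i j
  have h1 : Tendsto (fun k : ℕ => (M ^ k * D * Mᵀ ^ k) i j) atTop (nhds 0) := by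
    have hrw : ∀ k : ℕ, (M ^ k * D * Mᵀ ^ k) i j
        = ∑ b, ∑ a, (M ^ k) i a * D a b * (M ^ k) j b := by
      intro k
      simp [Matrix.mul_apply, Finset.sum_mul, ← Matrix.transpose_pow,
        Matrix.transpose_apply]
    simp only [hrw]
    have : Tendsto (fun _ : ℕ => (0 : ℝ)) atTop (nhds 0) := tendsto_const_nhds
    have hsum : Tendsto (fun k : ℕ => ∑ b, ∑ a, (M ^ k) i a * D a b * (M ^ k) j b)
        atTop (nhds (∑ b : Fin p, ∑ a : Fin p, (0 : ℝ))) := by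
      apply tendsto_finset_sum
      intro b _
      apply tendsto_finset_sum
      intro a _
      have ht : Tendsto (fun k : ℕ => (M ^ k) i a * D a b * (M ^ k) j b) atTop
          (nhds (0 * D a b * 0)) :=
        ((aux_pow_entry_tendsto_zero M hM i a).mul_const (D a b)).mul
          (aux_pow_entry_tendsto_zero M hM j b)
      simpa using ht
    simpa using hsum
  have h2 : ∀ k : ℕ, (M ^ k * D * Mᵀ ^ k) i j = D i j := fun k => by rw [← hiter]
  simp only [h2] at h1
  have := tendsto_nhds_unique h1 tendsto_const_nhds
  simpa using this.symm

end Aux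

/-- equation (23) of the paper. For the time-varying observer error
covariance recursion with Schur stable `M`, letting `Σ_{Δ_∞^i}` (here `SInf i`) be the
unique symmetric solution of `X = M X Mᵀ + Σ_W + L Σ_{Z_i} Lᵀ` and
`Υ_i = Σ_{Δ_∞^i} - Σ_{Δ_∞^{i-1}}`, we have
`Σ_{Δ_n} = Σ_{Δ_∞^n} - ∑_{i=1}^{n} M^{n-i+1} Υ_i (Mᵀ)^{n-i+1}` for every `n ≥ 1`. -/
theorem time_varying_covariance_steady_state_decomposition
    {p m : ℕ}
    (M : Matrix (Fin p) (Fin p) ℝ) (L : Matrix (Fin p) (Fin m) ℝ)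
    (hM : ∀ μ ∈ spectrum ℂ (M.map (Complex.ofReal : ℝ → ℂ)), ‖μ‖ < 1)
    (SW : Matrix (Fin p) (Fin p) ℝ) (hSW : SWᵀ = SW)
    (SZ : ℕ → Matrix (Fin m) (Fin m) ℝ) (hSZ : ∀ n, (SZ n)ᵀ = SZ n)
    (SD : ℕ → Matrix (Fin p) (Fin p) ℝ)
    (h0 : SD 0 = M * SD 0 * Mᵀ + SW + L * SZ 0 * Lᵀ)
    (hrec : ∀ n : ℕ, 1 ≤ n → SD n = M * SD (n - 1) * Mᵀ + SW + L * SZ n * Lᵀ)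
    (SInf : ℕ → Matrix (Fin p) (Fin p) ℝ)
    (hSInfSymm : ∀ i, (SInf i)ᵀ = SInf i)
    (hSInf : ∀ i, SInf i = M * SInf i * Mᵀ + SW + L * SZ i * Lᵀ) :
    ∀ n : ℕ, 1 ≤ n →
      SD n = SInf n -
        ∑ i ∈ Finset.Icc 1 n,
          M ^ (n - i + 1) * (SInf i - SInf (i - 1)) * (Mᵀ) ^ (n - i + 1) := by
  have hD : SD 0 - SInf 0 = M * (SD 0 - SInf 0) * Mᵀ := by
    nth_rewrite 1 [h0]
    nth_rewrite 1 [hSInf 0]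
    rw [mul_sub, sub_mul]
    abel
  have hbase : SD 0 = SInf 0 := sub_eq_zero.mp (aux_fixed_zero M hM _ hD)
  have key : ∀ n : ℕ, SD n = SInf n -
      ∑ i ∈ Finset.Icc 1 n,
        M ^ (n - i + 1) * (SInf i - SInf (i - 1)) * (Mᵀ) ^ (n - i + 1) := by
    intro n
    induction n with
    | zero => simp [hbase]
    | succ n ih =>
      have hs : ∑ i ∈ Finset.Icc 1 (n + 1),
            M ^ (n + 1 - i + 1) * (SInf i - SInf (i - 1)) * (Mᵀ) ^ (n + 1 - i + 1)
          = M * (∑ i ∈ Finset.Icc 1 n,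
              M ^ (n - i + 1) * (SInf i - SInf (i - 1)) * (Mᵀ) ^ (n - i + 1)) * Mᵀ
            + M * (SInf (n + 1) - SInf n) * Mᵀ := by
        rw [Finset.sum_Icc_succ_top (by omega : 1 ≤ n + 1)]
        congr 1
        · rw [Finset.mul_sum, Finset.sum_mul]
          apply Finset.sum_congr rfl
          intro i hi
          have hin : i ≤ n := (Finset.mem_Icc.mp hi).2
          have he : n + 1 - i + 1 = (n - i + 1) + 1 := by omega
          have hM1 : M ^ (n - i + 1 + 1) = M * M ^ (n - i + 1) := pow_succ' M _
          have hM2 : (Mᵀ) ^ (n - i + 1 + 1) = (Mᵀ) ^ (n - i + 1) * Mᵀ := pow_succ Mᵀ _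
          rw [he, hM1, hM2]
          simp only [Matrix.mul_assoc]
        · simp
      rw [hrec (n + 1) (by omega)]
      simp only [Nat.add_sub_cancel]
      rw [ih, hs, mul_sub, sub_mul, mul_sub, sub_mul]
      nth_rewrite 1 [hSInf (n + 1)]
      abel
  intro n _
  exact key n
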